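/- Let H be a finite-dimensional Hilbert space decomposed as an orthogonal direct sum H = ⊕_d H_d with orthogonal projections Π_d. Let ψ_in and ψ_targ be unit vectors with α_d = ‖Π_d ψ_in‖ and β_d = ‖Π_d ψ_targ‖. Then for any unitary U preserving each subspace H_d, |⟨U ψ_in, ψ_targ⟩|² ≤ (∑_d α_d β_d)². -/

import Mathlib

open scoped InnerProductSpace

theorem fidelity_bound_of_invariant_subspaces
    {E : Type*} [NormedAddCommGroup E] [InnerProductSpace ℂ E]
    [FiniteDimensional ℂ E]
    {ι : Type*} [Fintype ι]
    (K : ι → Submodule ℂ E)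
    (horth : ∀ d d', d ≠ d' → ∀ x ∈ K d, ∀ y ∈ K d', ⟪x, y⟫_ℂ = 0)
    (hsup : (⨆ d, K d) = ⊤)
    (ψin ψtarg : E) (hin : ‖ψin‖ = 1) (htarg : ‖ψtarg‖ = 1)
    (U : E ≃ₗᵢ[ℂ] E) (hU : ∀ d, (K d).map U.toLinearEquiv.toLinearMap = K d) :
    ‖(⟪U ψin, ψtarg⟫_ℂ)‖ ^ 2 ≤
      (∑ d, ‖((K d).orthogonalProjection ψin : E)‖ *
            ‖((K d).orthogonalProjection ψtarg : E)‖) ^ 2 := by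
  set P : ι → E → E := fun d x => ((K d).orthogonalProjection x : E) with hP
  -- each vector is the sum of its projections
  have hsum : ∀ y : E, ∑ d, P d y = y := by
    intro y
    have hz : y - ∑ d, P d y ∈ (⨆ d, K d)ᗮ := by
      rw [← Submodule.iInf_orthogonal]
      refine Submodule.mem_iInf _ |>.2 fun d => ?_
      intro w hw
      rw [inner_sub_right, inner_sum]
      have h1 : ∀ d' ∈ Finset.univ, d' ≠ d → ⟪w, P d' y⟫_ℂ = 0 := fun d' _ hd' =>
        horth d d' (Ne.symm hd') w hw _ ((K d').orthogonalProjection y).2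
      rw [Finset.sum_eq_single d h1 (by simp)]
      have h2 : ⟪w, y - P d y⟫_ℂ = 0 := Submodule.sub_starProjection_mem_orthogonal (K := K d) y w hw
      rw [inner_sub_right] at h2
      linear_combination h2
    rw [hsup, Submodule.top_orthogonal_eq_bot, Submodule.mem_bot, sub_eq_zero] at hz
    exact hz.symm
  -- inner product decomposes
  have hinner : ∀ x y : E, ⟪x, y⟫_ℂ = ∑ d, ⟪P d x, P d y⟫_ℂ := by
    intro x y
    conv_lhs => rw [← hsum y]
    rw [inner_sum]
    refine Finset.sum_congr rfl fun d _ => ?_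
    have h0 : ⟪x - P d x, P d y⟫_ℂ = 0 := (Submodule.mem_orthogonal' _ _).1
      (Submodule.sub_starProjection_mem_orthogonal (K := K d) x)
      (P d y) ((K d).orthogonalProjection y).2
    rw [inner_sub_left] at h0
    linear_combination h0
  -- projections commute with U
  have hcomm : ∀ d (ψ : E), P d (U ψ) = U (P d ψ) := by
    intro d ψ
    have hv : U (P d ψ) ∈ K d := by
      rw [← hU d]
      exact ⟨P d ψ, ((K d).orthogonalProjection ψ).2, rfl⟩
    refine Submodule.eq_starProjection_of_mem_orthogonal' (z := U (ψ - P d ψ)) hv ?_ ?_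
    · intro w hw
      obtain ⟨x, hx, rfl⟩ : ∃ x ∈ K d, U x = w := by
        rw [← hU d] at hw; exact hw
      rw [U.inner_map_map]
      exact Submodule.sub_starProjection_mem_orthogonal (K := K d) ψ x hx
    · rw [← map_add]
      congr 1
      abel
  have hnorm : ∀ d, ‖P d (U ψin)‖ = ‖P d ψin‖ := fun d => by
    rw [hcomm d ψin, U.norm_map]
  have key : ‖(⟪U ψin, ψtarg⟫_ℂ)‖ ≤ ∑ d, ‖P d ψin‖ * ‖P d ψtarg‖ := by
    rw [hinner (U ψin) ψtarg]
    refine (norm_sum_le _ _).trans (Finset.sum_le_sum fun d _ => ?_)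
    calc ‖⟪P d (U ψin), P d ψtarg⟫_ℂ‖ ≤ ‖P d (U ψin)‖ * ‖P d ψtarg‖ :=
          norm_inner_le_norm _ _
      _ = ‖P d ψin‖ * ‖P d ψtarg‖ := by rw [hnorm d]
  exact pow_le_pow_left₀ (norm_nonneg _) key 2
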